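/- Let (X, τ) be a T_d topological space with derived-set operator d, and let τ⁺ be its derivative topology. Then a point x ∈ X is doubly d-reflexive (x ∈ d(X) and for all A, B ⊆ X, x ∈ d(A) ∩ d(B) implies x ∈ d(d(A) ∩ d(B))) if and only if x is a limit point of the space (X, τ⁺), i.e., x belongs to the τ⁺-derived set of X. -/

import Mathlib

open TopologicalSpace Set Filter

/-- The derivative topology `τ⁺` of a topology `t`: the topology generated by
the `t`-open sets together with all derived sets `d_t(A)`, `A ⊆ X`. -/
def derivTopology {X : Type*} (t : TopologicalSpace X) : TopologicalSpace X :=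
  TopologicalSpace.generateFrom
    ({U : Set X | @IsOpen X t U} ∪ {S : Set X | ∃ A : Set X, S = @derivedSet X t A})

/-- In a `T_d`-space `(X, t)`, a point `x` is doubly d-reflexive
iff `x` is a limit point of `(X, t⁺)`. -/
theorem doublyReflexive_iff_limitPoint_derivTopology {X : Type*} [t : TopologicalSpace X]
    (hTd : ∀ A : Set X, IsClosed (derivedSet A)) (x : X) :
    (x ∈ derivedSet (Set.univ : Set X) ∧
        ∀ A B : Set X, x ∈ derivedSet A ∩ derivedSet B →
          x ∈ derivedSet (derivedSet A ∩ derivedSet B)) ↔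
      x ∈ @derivedSet X (derivTopology t) Set.univ := by
  set G : Set (Set X) :=
    ({U : Set X | @IsOpen X t U} ∪ {S : Set X | ∃ A : Set X, S = @derivedSet X t A}) with hG
  constructor
  · rintro ⟨hx, hdbl⟩
    have key : ∀ V : Set X, TopologicalSpace.GenerateOpen G V →
        x ∈ V → ∃ U C : Set X, IsOpen U ∧ IsClosed C ∧ x ∈ U ∧ x ∈ derivedSet C ∧
          U ∩ C ⊆ V := by
      intro V hV
      induction hV with
      | basic s hs =>
        intro hxs
        rcases hs with hs | ⟨A, rfl⟩
        · exact ⟨s, Set.univ, hs, isClosed_univ, hxs, hx, fun y hy => hy.1⟩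
        · refine ⟨Set.univ, derivedSet A, isOpen_univ, hTd A, trivial, ?_, fun y hy => hy.2⟩
          have := hdbl A A ⟨hxs, hxs⟩
          simpa using this
      | univ =>
        exact fun _ => ⟨Set.univ, Set.univ, isOpen_univ, isClosed_univ, trivial, hx,
          fun y hy => trivial⟩
      | inter s u hs hu ihs ihu =>
        intro hxsu
        obtain ⟨U1, C1, hU1, hC1, hxU1, hxd1, hsub1⟩ := ihs hxsu.1
        obtain ⟨U2, C2, hU2, hC2, hxU2, hxd2, hsub2⟩ := ihu hxsu.2
        refine ⟨U1 ∩ U2, C1 ∩ C2, hU1.inter hU2, hC1.inter hC2, ⟨hxU1, hxU2⟩, ?_, ?_⟩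
        · have h := hdbl C1 C2 ⟨hxd1, hxd2⟩
          have hsub : derivedSet C1 ∩ derivedSet C2 ⊆ C1 ∩ C2 := fun y hy =>
            ⟨hC1.closure_eq ▸ derivedSet_subset_closure C1 hy.1,
             hC2.closure_eq ▸ derivedSet_subset_closure C2 hy.2⟩
          exact derivedSet_mono _ _ hsub h
        · exact fun y hy => ⟨hsub1 ⟨hy.1.1, hy.2.1⟩, hsub2 ⟨hy.1.2, hy.2.2⟩⟩
      | sUnion S hS ih =>
        intro hxS
        obtain ⟨s, hsS, hxs⟩ := hxS
        obtain ⟨U, C, h1, h2, h3, h4, h5⟩ := ih s hsS hxs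
        exact ⟨U, C, h1, h2, h3, h4, h5.trans (Set.subset_sUnion_of_mem hsS)⟩
    refine (@accPt_iff_nhds X (derivTopology t) x Set.univ).mpr ?_
    intro V hV
    obtain ⟨W, hWV, hWopen, hxW⟩ :=
      (@mem_nhds_iff X (derivTopology t) x V).mp hV
    obtain ⟨U, C, hU, hC, hxU, hxd, hsub⟩ := key W hWopen hxW
    rw [mem_derivedSet, accPt_iff_nhds] at hxd
    obtain ⟨y, hyUC, hyx⟩ := hxd U (hU.mem_nhds hxU)
    exact ⟨y, ⟨hWV (hsub hyUC), trivial⟩, hyx⟩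
  · intro h
    replace h := (@accPt_iff_nhds X (derivTopology t) x Set.univ).mp h
    have hnhds : ∀ s : Set X, s ∈ G → x ∈ s → s ∈ @nhds X (derivTopology t) x :=
      fun s hs hxs => @IsOpen.mem_nhds X (derivTopology t) x s
        (TopologicalSpace.isOpen_generateFrom_of_mem hs) hxs
    constructor
    · rw [mem_derivedSet, accPt_iff_nhds]
      intro U hU
      obtain ⟨W, hWU, hWopen, hxW⟩ := mem_nhds_iff.mp hU
      obtain ⟨y, hyW, hyx⟩ := h W (hnhds W (Or.inl hWopen) hxW)
      exact ⟨y, ⟨hWU hyW.1, trivial⟩, hyx⟩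
    · rintro A B ⟨hA, hB⟩
      rw [mem_derivedSet, accPt_iff_nhds]
      intro U hU
      obtain ⟨W, hWU, hWopen, hxW⟩ := mem_nhds_iff.mp hU
      have hV : W ∩ (derivedSet A ∩ derivedSet B) ∈ @nhds X (derivTopology t) x := by
        have h1 := hnhds W (Or.inl hWopen) hxW
        have h2 := hnhds (derivedSet A) (Or.inr ⟨A, rfl⟩) hA
        have h3 := hnhds (derivedSet B) (Or.inr ⟨B, rfl⟩) hB
        exact Filter.inter_mem h1 (Filter.inter_mem h2 h3)
      obtain ⟨y, hyW, hyx⟩ := h _ hV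
      exact ⟨y, ⟨hWU hyW.1.1, hyW.1.2⟩, hyx⟩
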